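/- arXiv:1909.01485 — 7 statements merged into one kernel-verified Lean document; each statement's English description precedes it below -/
import Mathlib

section
/- Let G be a finite group and m a positive integer dividing the order of G. Then m divides the number of elements x in G satisfying x^m = 1. -/
open Subgroup MulAction

section Helpers

universe u

variable {G : Type u}

lemma pow_eq_one_iff_gcd [Group G] [Finite G] (x : G) (m : ℕ) :
    x ^ m = 1 ↔ x ^ Nat.gcd m (Nat.card G) = 1 := by
  rw [← orderOf_dvd_iff_pow_eq_one, ← orderOf_dvd_iff_pow_eq_one, Nat.dvd_gcd_iff,
    and_iff_left (orderOf_dvd_natCard x)]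

lemma card_and_split {α : Type*} [Finite α] (P Q : α → Prop) :
    Nat.card {x : α // P x} = Nat.card {x : α // P x ∧ Q x} + Nat.card {x : α // P x ∧ ¬ Q x} := by
  classical
  rw [← Nat.card_sum]
  exact Nat.card_congr (((Equiv.sumCompl (fun a : {x // P x} => Q a.1)).symm.trans
    (Equiv.sumCongr (Equiv.subtypeSubtypeEquivSubtypeInter P Q)
      (Equiv.subtypeSubtypeEquivSubtypeInter P (fun x => ¬ Q x)))).symm).symm

lemma normal_of_le_center [Group G] (P : Subgroup G) (hP : P ≤ Subgroup.center G) : P.Normal := by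
  constructor
  intro n hn g
  have : n ∈ Subgroup.center G := hP hn
  rw [Subgroup.mem_center_iff] at this
  simpa [this g] using hn

end Helpers

section QuotientLemma

universe u
variable {G : Type u}

lemma card_pow_eq_one_quotient [Group G] [Finite G] (P : Subgroup G) [P.Normal]
    (hP : P ≤ Subgroup.center G) {m : ℕ} (hcop : (Nat.card P).Coprime m) :
    Nat.card {x : G ⧸ P // x ^ m = 1} = Nat.card {x : G // x ^ m = 1} := by
  have hcomm : ∀ (u : G) (_ : u ∈ P) (g : G), g * u = u * g := fun u hu g =>
    Subgroup.mem_center_iff.mp (hP hu) g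
  have key : Function.Bijective
      (fun x : {x : G // x ^ m = 1} =>
        (⟨((x.1 : G) : G ⧸ P), by rw [← QuotientGroup.mk_pow, x.2]; rfl⟩ :
          {x : G ⧸ P // x ^ m = 1})) := by
    constructor
    · rintro ⟨a, ha⟩ ⟨b, hb⟩ h
      simp only [Subtype.mk.injEq] at h ⊢
      have hu : a⁻¹ * b ∈ P := (QuotientGroup.eq (s := P)).mp h
      have hcomm' : Commute a (a⁻¹ * b) := (hcomm _ hu a)
      have hb' : b = a * (a⁻¹ * b) := by group
      have hum : (a⁻¹ * b) ^ m = 1 := by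
        have : (a * (a⁻¹ * b)) ^ m = a ^ m * (a⁻¹ * b) ^ m := hcomm'.mul_pow m
        rw [← hb', hb, ha, one_mul] at this
        exact this.symm
      have : orderOf (a⁻¹ * b) ∣ Nat.gcd (Nat.card P) m :=
        Nat.dvd_gcd (Subgroup.orderOf_dvd_natCard P hu) (orderOf_dvd_iff_pow_eq_one.mpr hum)
      rw [hcop] at this
      have h1 : a⁻¹ * b = 1 := by
        have := Nat.dvd_one.mp this
        rwa [orderOf_eq_one_iff] at this
      exact inv_mul_eq_one.mp h1
    · rintro ⟨xbar, hx⟩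
      obtain ⟨x, rfl⟩ := QuotientGroup.mk_surjective xbar
      have hxm : x ^ m ∈ P := by
        rw [← QuotientGroup.eq_one_iff, QuotientGroup.mk_pow]
        exact hx
      set v : ↥P := ⟨x ^ m, hxm⟩ with hv
      set u : ↥P := (powCoprime hcop).symm v⁻¹ with huu
      have hum : u ^ m = v⁻¹ := (powCoprime hcop).apply_symm_apply v⁻¹
      have hcmx : Commute x (u : G) := hcomm _ u.2 x
      have hxu : (x * (u : G)) ^ m = 1 := by
        rw [hcmx.mul_pow]
        have : ((u : G)) ^ m = ((u ^ m : ↥P) : G) := rfl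
        rw [this, hum]
        simp [hv]
      refine ⟨⟨x * (u : G), hxu⟩, ?_⟩
      apply Subtype.ext
      show ((x * (u : G) : G) : G ⧸ P) = (x : G ⧸ P)
      rw [QuotientGroup.mk_mul]
      have : ((u : G) : G ⧸ P) = 1 := (QuotientGroup.eq_one_iff _).mpr u.2
      rw [this, mul_one]
  exact (Nat.card_congr (Equiv.ofBijective _ key)).symm

end QuotientLemma

section Decomp

universe u
variable {G : Type u}

lemma card_T_eq [Group G] [Finite G] {p b m : ℕ} (hp : p.Prime) (hpm : ¬ p ∣ m) (hm : 0 < m) :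
    Nat.card {x : G // x ^ (p ^ b * m * p) = 1 ∧ ¬ x ^ (p ^ b * m) = 1}
      = Nat.card (Σ y : {y : G // orderOf y = p ^ (b + 1)},
          {z : G // z * y.1 = y.1 * z ∧ z ^ m = 1}) := by
  set q := p ^ (b + 1) with hq
  set n := p ^ b * m with hn
  have hnpos : 0 < n := Nat.mul_pos (Nat.pow_pos hp.pos) hm
  have hq1 : 1 < q := Nat.one_lt_pow (Nat.succ_ne_zero b) hp.one_lt
  have hnp : n * p = q * m := by rw [hn, hq, pow_succ]; ring
  have hcop : Nat.Coprime m q :=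
    Nat.Coprime.pow_right _ (Nat.coprime_comm.mp (hp.coprime_iff_not_dvd.mpr hpm))
  obtain ⟨k, -, hk⟩ := Nat.exists_mul_mod_eq_one_of_coprime hcop hq1
  have hpk : ¬ p ∣ k := by
    intro hdvd
    have h1 : m * k ≡ 1 [MOD q] := by
      unfold Nat.ModEq
      rw [hk, Nat.mod_eq_of_lt hq1]
    have h2 : m * k ≡ 1 [MOD p] := h1.of_dvd (by rw [hq]; exact dvd_pow_self p (Nat.succ_ne_zero b))
    have h0 : m * k ≡ 0 [MOD p] := Nat.modEq_zero_iff_dvd.mpr (hdvd.mul_left m)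
    exact hp.ne_one (Nat.dvd_one.mp (Nat.modEq_zero_iff_dvd.mp (h2.symm.trans h0)))
  have hgcdqn : Nat.gcd q n = p ^ b := by
    rw [hq, hn, pow_succ, Nat.gcd_mul_left]
    rw [Nat.Coprime.gcd_eq_one (hp.coprime_iff_not_dvd.mpr hpm), mul_one]
  -- membership of the image
  have hmem : ∀ y z : G, orderOf y = q → z * y = y * z → z ^ m = 1 →
      (y * z) ^ (n * p) = 1 ∧ ¬ (y * z) ^ n = 1 := by
    intro y z hy hc hz
    have hcom : Commute y z := hc.symm
    constructor
    · rw [hcom.mul_pow, hnp]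
      have h1 : y ^ (q * m) = 1 := by rw [pow_mul, ← hy, pow_orderOf_eq_one, one_pow]
      have h2 : z ^ (q * m) = 1 := by rw [mul_comm, pow_mul, hz, one_pow]
      rw [h1, h2, one_mul]
    · intro hcontra
      rw [hcom.mul_pow] at hcontra
      have h1 : orderOf (y ^ n) = p := by
        rw [orderOf_pow' _ hnpos.ne', hy, hgcdqn, hq, pow_succ,
          Nat.mul_div_cancel_left _ (Nat.pow_pos hp.pos)]
      have h2 : y ^ n = (z ^ n)⁻¹ := eq_inv_of_mul_eq_one_left hcontra
      have h3 : orderOf (y ^ n) ∣ m := by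
        rw [h2, orderOf_inv]
        exact (orderOf_pow_dvd n).trans (orderOf_dvd_of_pow_eq_one hz)
      rw [h1] at h3
      exact hpm h3
  -- injectivity key
  have hkey : ∀ y z : G, orderOf y = q → z * y = y * z → z ^ m = 1 → (y * z) ^ (m * k) = y := by
    intro y z hy hc hz
    have hcom : Commute y z := hc.symm
    rw [hcom.mul_pow]
    have h1 : z ^ (m * k) = 1 := by rw [pow_mul, hz, one_pow]
    have h2 : y ^ (m * k) = y := by
      rw [← pow_mod_orderOf, hy, hk, pow_one]
    rw [h1, h2, mul_one]
  have main : Function.Bijective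
      (fun s : (Σ y : {y : G // orderOf y = q}, {z : G // z * y.1 = y.1 * z ∧ z ^ m = 1}) =>
        (⟨s.1.1 * s.2.1, hmem s.1.1 s.2.1 s.1.2 s.2.2.1 s.2.2.2⟩ :
          {x : G // x ^ (n * p) = 1 ∧ ¬ x ^ n = 1})) := by
    constructor
    · rintro ⟨⟨y, hy⟩, ⟨z, hzc, hzm⟩⟩ ⟨⟨y', hy'⟩, ⟨z', hzc', hzm'⟩⟩ h
      simp only [Subtype.mk.injEq] at h
      have hyy : y = y' := by
        rw [← hkey y z hy hzc hzm, ← hkey y' z' hy' hzc' hzm', h]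
      subst hyy
      have hzz : z = z' := mul_left_cancel h
      subst hzz
      rfl
    · rintro ⟨x, hx1, hx2⟩
      set y := x ^ (m * k) with hydef
      have hxq : x ^ (q * m) = 1 := by rw [← hnp]; exact hx1
      have hcy : Commute x y := (Commute.refl x).pow_right _
      have hyq : y ^ q = 1 := by
        rw [hydef, ← pow_mul]
        have : m * k * q = q * m * k := by ring
        rw [this, pow_mul, hxq, one_pow]
      have hyo : orderOf y = q := by
        obtain ⟨i, hi, hio⟩ := (Nat.dvd_prime_pow hp).mp (hq ▸ orderOf_dvd_of_pow_eq_one hyq)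
        have hieq : i = b + 1 := by
          by_contra hne
          have hib : i ≤ b := Nat.lt_succ_iff.mp (Nat.lt_of_le_of_ne hi hne)
          have hyb : y ^ p ^ b = 1 := by
            have : orderOf y ∣ p ^ b := hio ▸ pow_dvd_pow p hib
            exact orderOf_dvd_iff_pow_eq_one.mp this
          have hdx : orderOf x ∣ m * p ^ b := by
            have d1 : orderOf x ∣ m * q := by
              rw [mul_comm]; exact orderOf_dvd_of_pow_eq_one hxq
            have d2 : orderOf x ∣ m * (k * p ^ b) := by
              have : x ^ (m * (k * p ^ b)) = 1 := by
                have e : m * (k * p ^ b) = m * k * p ^ b := by ring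
                rw [e, pow_mul, ← hydef, hyb]
              exact orderOf_dvd_of_pow_eq_one this
            have := Nat.dvd_gcd d1 d2
            rwa [Nat.gcd_mul_left, hq, pow_succ, mul_comm (p ^ b) p, Nat.gcd_mul_right,
              Nat.Coprime.gcd_eq_one (hp.coprime_iff_not_dvd.mpr hpk), one_mul] at this
          have : x ^ n = 1 := by
            apply orderOf_dvd_iff_pow_eq_one.mp
            rwa [hn, mul_comm]
          exact hx2 this
        rw [hio, hieq, hq]
      set z := y⁻¹ * x with hzdef
      have hyzx : y * z = x := by rw [hzdef, ← mul_assoc, mul_inv_cancel, one_mul]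
      have hzyx : z * y = x := by rw [hzdef, mul_assoc, hcy.eq, ← mul_assoc, inv_mul_cancel, one_mul]
      have hzy : z * y = y * z := hzyx.trans hyzx.symm
      have hym : y ^ m = x ^ m := by
        rw [hydef, ← pow_mul]
        obtain ⟨t, ht⟩ : ∃ t, m * k = q * t + 1 := ⟨m * k / q, by rw [← hk]; exact (Nat.div_add_mod _ _).symm⟩
        have : m * k * m = q * m * t + m := by rw [ht]; ring
        rw [this, pow_add, pow_mul, hxq, one_pow, one_mul]
      have hzm : z ^ m = 1 := by
        have hcyx : Commute y⁻¹ x := hcy.symm.inv_left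
        rw [hzdef, hcyx.mul_pow, inv_pow, hym, inv_mul_cancel]
      refine ⟨⟨⟨y, hyo⟩, ⟨z, hzy, hzm⟩⟩, ?_⟩
      exact Subtype.ext hyzx
  exact (Nat.card_congr (Equiv.ofBijective _ main)).symm

end Decomp

section OrbitSum

lemma dvd_sum_of_orbits {K α : Type*} [Group K] [Fintype α] [MulAction K α]
    (F : α → ℕ) (hF : ∀ (k : K) (a : α), F (k • a) = F a) (n : ℕ)
    (h : ∀ a : α, n ∣ Nat.card (MulAction.orbit K a) * F a) :
    n ∣ ∑ a : α, F a := by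
  classical
  haveI : Finite (Quotient (MulAction.orbitRel K α)) := Quotient.finite _
  haveI := Fintype.ofFinite (Quotient (MulAction.orbitRel K α))
  rw [← Finset.sum_fiberwise_of_maps_to
    (g := Quotient.mk (MulAction.orbitRel K α)) (t := Finset.univ)
    (fun i _ => Finset.mem_univ _) F]
  apply Finset.dvd_sum
  intro j _
  obtain ⟨a, rfl⟩ := Quotient.exists_rep j
  have horb : ∀ i : α, Quotient.mk (MulAction.orbitRel K α) i
      = Quotient.mk (MulAction.orbitRel K α) a ↔ i ∈ MulAction.orbit K a := by
    intro i
    rw [Quotient.eq]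
    exact Iff.rfl
  have hconst : ∀ i ∈ Finset.univ.filter
      (fun i => Quotient.mk (MulAction.orbitRel K α) i = Quotient.mk (MulAction.orbitRel K α) a),
      F i = F a := by
    intro i hi
    rw [Finset.mem_filter] at hi
    obtain ⟨k, rfl⟩ := (horb i).mp hi.2
    exact hF k a
  rw [Finset.sum_const_nat hconst]
  have hcard : (Finset.univ.filter
      (fun i => Quotient.mk (MulAction.orbitRel K α) i = Quotient.mk (MulAction.orbitRel K α) a)).card
      = Nat.card (MulAction.orbit K a) := by
    rw [← Fintype.card_subtype, Nat.card_eq_fintype_card]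
    exact Fintype.card_congr (Equiv.subtypeEquivRight horb)
  rw [hcard]
  exact h a

end OrbitSum

section BigOrbit

universe u

lemma commute_conj {G : Type u} [Group G] {z w : G} (h : Commute z w) (g : G) :
    Commute (g * z * g⁻¹) (g * w * g⁻¹) := by
  have h' : z * w = w * z := h
  show (g * z * g⁻¹) * (g * w * g⁻¹) = (g * w * g⁻¹) * (g * z * g⁻¹)
  calc (g * z * g⁻¹) * (g * w * g⁻¹) = g * (z * w) * g⁻¹ := by group
    _ = g * (w * z) * g⁻¹ := by rw [h']
    _ = (g * w * g⁻¹) * (g * z * g⁻¹) := by group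

section KActDef

variable (G : Type u) [Group G] (q : ℕ) [Fact (1 < q)]

lemma hq_pos' : NeZero q := ⟨by have : 1 < q := Fact.out; omega⟩

lemma pow_mod_of_orderOf_eq {G : Type u} [Group G] {q : ℕ} (y : G) (hy : orderOf y = q)
    (a : ℕ) : y ^ (a % q) = y ^ a := by
  rw [← hy]; exact pow_mod_orderOf y a

def kAct : MulAction (G × (ZMod q)ˣ) {y : G // orderOf y = q} := by
  haveI : NeZero q := hq_pos' q
  exact
  { smul := fun k y => ⟨k.1 * y.1 ^ (k.2 : ZMod q).val * k.1⁻¹, by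
      have h1 : orderOf (y.1 ^ (k.2 : ZMod q).val) = orderOf y.1 :=
        Nat.Coprime.orderOf_pow (by rw [y.2]; exact (ZMod.val_coe_unit_coprime k.2).symm)
      have h2 : orderOf (k.1 * y.1 ^ (k.2 : ZMod q).val * k.1⁻¹)
          = orderOf (y.1 ^ (k.2 : ZMod q).val) := by
        have := orderOf_injective (MulAut.conj k.1).toMonoidHom
          (MulAut.conj k.1).injective (y.1 ^ (k.2 : ZMod q).val)
        simpa using this
      rw [h2, h1, y.2]⟩
    one_smul := by
      intro y
      apply Subtype.ext
      show (1 : G) * y.1 ^ ((1 : (ZMod q)ˣ) : ZMod q).val * (1 : G)⁻¹ = y.1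
      rw [Units.val_one, ZMod.val_one q, pow_one, one_mul, inv_one, mul_one]
    mul_smul := by
      rintro ⟨g, u⟩ ⟨g', u'⟩ y
      apply Subtype.ext
      show (g * g') * y.1 ^ ((u * u' : (ZMod q)ˣ) : ZMod q).val * (g * g')⁻¹
        = g * ((g' * y.1 ^ (u' : ZMod q).val * g'⁻¹) ^ (u : ZMod q).val) * g⁻¹
      have hE : y.1 ^ ((u * u' : (ZMod q)ˣ) : ZMod q).val
          = (y.1 ^ (u' : ZMod q).val) ^ (u : ZMod q).val := by
        rw [← pow_mul, Units.val_mul, ZMod.val_mul]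
        have h9 : (u : ZMod q).val * (u' : ZMod q).val % q
            = ((u' : ZMod q).val * (u : ZMod q).val) % q := by rw [Nat.mul_comm]
        rw [h9, pow_mod_of_orderOf_eq y.1 y.2]
      rw [conj_pow, ← hE, mul_inv_rev]
      group }

end KActDef


lemma arith_key {p b m cG O S' C' w F : ℕ} (hp : p.Prime) (hpm : ¬ p ∣ m) (hm : 0 < m)
    (hS'pos : 0 < S') (hOS : O * S' = cG * (p ^ b * (p - 1))) (hSsplit : S' = w * C')
    (hw : w ∣ p ^ b * (p - 1)) (hSG : S' ∣ cG) (hmG : m ∣ cG)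
    (hIH : Nat.gcd m C' ∣ F) : p ^ b * m ∣ O * F := by
  have hwpos : 0 < w := by
    rcases Nat.eq_zero_or_pos w with h | h
    · rw [h, zero_mul] at hSsplit; omega
    · exact h
  have hCpos : 0 < C' := by
    rcases Nat.eq_zero_or_pos C' with h | h
    · rw [h, mul_zero] at hSsplit; omega
    · exact h
  set v := w.factorization p with hv
  set w' := w / p ^ v with hw'def
  have hw_fact : p ^ v * w' = w := Nat.ordProj_mul_ordCompl_eq_self w p
  have hw'p : ¬ p ∣ w' := Nat.not_dvd_ordCompl hp hwpos.ne'
  have hw'dvd : w' ∣ p - 1 := by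
    have h1 : w' ∣ p ^ b * (p - 1) := (Nat.ordCompl_dvd w p).trans hw
    exact Nat.Coprime.dvd_of_dvd_mul_left
      (Nat.Coprime.pow_right b (Nat.coprime_comm.mp (hp.coprime_iff_not_dvd.mpr hw'p))) h1
  set m₁ := Nat.gcd m C' with hm₁
  have hm₁m : m₁ ∣ m := Nat.gcd_dvd_left _ _
  have hm₁pos : 0 < m₁ := Nat.gcd_pos_of_pos_left _ hm
  have hmco : Nat.Coprime m (p ^ v) :=
    Nat.Coprime.pow_right v (Nat.coprime_comm.mp (hp.coprime_iff_not_dvd.mpr hpm))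
  have hgcd2 : Nat.gcd m (C' * p ^ v) = m₁ := by
    apply Nat.dvd_antisymm
    · apply Nat.dvd_gcd (Nat.gcd_dvd_left _ _)
      exact Nat.Coprime.dvd_of_dvd_mul_right
        (Nat.Coprime.coprime_dvd_left (Nat.gcd_dvd_left _ _) hmco)
        (Nat.gcd_dvd_right _ _)
    · exact Nat.dvd_gcd (Nat.gcd_dvd_left _ _)
        ((Nat.gcd_dvd_right m C').trans (dvd_mul_right _ _))
  have hCp : C' * p ^ v ∣ cG := by
    refine dvd_trans ?_ hSG
    rw [hSsplit, ← hw_fact]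
    exact ⟨w', by ring⟩
  have hlcm : (m / m₁) * (C' * p ^ v) ∣ cG := by
    have h1 : Nat.lcm m (C' * p ^ v) ∣ cG := Nat.lcm_dvd hmG hCp
    have h2 : m₁ * ((m / m₁) * (C' * p ^ v)) = m₁ * Nat.lcm m (C' * p ^ v) := by
      rw [← mul_assoc, Nat.mul_div_cancel' hm₁m, ← hgcd2, Nat.gcd_mul_lcm]
    rw [Nat.eq_of_mul_eq_mul_left hm₁pos h2]
    exact h1
  have hmain : p ^ b * (m / m₁) ∣ O := by
    rw [← mul_dvd_mul_iff_right hS'pos.ne']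
    rw [hOS, hSsplit, ← hw_fact]
    have e1 : p ^ b * (m / m₁) * (p ^ v * w' * C') = ((m / m₁) * (C' * p ^ v)) * w' * p ^ b := by
      ring
    have e2 : cG * (p ^ b * (p - 1)) = cG * (p - 1) * p ^ b := by ring
    rw [e1, e2]
    exact mul_dvd_mul (mul_dvd_mul hlcm hw'dvd) dvd_rfl
  have efinal : p ^ b * m = (p ^ b * (m / m₁)) * m₁ := by
    rw [mul_assoc, Nat.div_mul_cancel hm₁m]
  rw [efinal]
  exact mul_dvd_mul hmain hIH
set_option maxHeartbeats 1000000 in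
lemma dvd_card_sigma {G : Type u} [Group G] [Finite G] {p b m : ℕ} (hp : p.Prime)
    (hpm : ¬ p ∣ m) (hm : 0 < m) (hmG : m ∣ Nat.card G)
    (hIH : ∀ y : G, orderOf y = p ^ (b + 1) →
      Nat.gcd m (Nat.card (Subgroup.centralizer {y})) ∣
        Nat.card {z : G // z * y = y * z ∧ z ^ m = 1}) :
    p ^ b * m ∣ Nat.card (Σ y : {y : G // orderOf y = p ^ (b + 1)},
        {z : G // z * y.1 = y.1 * z ∧ z ^ m = 1}) := by
  classical
  haveI := Fintype.ofFinite G
  set q := p ^ (b + 1) with hq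
  have hq1 : 1 < q := Nat.one_lt_pow (Nat.succ_ne_zero b) hp.one_lt
  haveI : Fact (1 < q) := ⟨hq1⟩
  haveI : NeZero q := ⟨by omega⟩
  have hyrec : ∀ y : G, orderOf y = q → ∀ (u : (ZMod q)ˣ) (w : G),
      Commute w (y ^ (u : ZMod q).val) → Commute w y := by
    intro y hy u w hw
    obtain ⟨j, -, hj⟩ := Nat.exists_mul_mod_eq_one_of_coprime
      (ZMod.val_coe_unit_coprime u) hq1
    have : ((y ^ (u : ZMod q).val) ^ j) = y := by
      rw [← pow_mul, ← pow_mod_of_orderOf_eq y hy, hj, pow_one]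
    rw [← this]
    exact hw.pow_right j
  letI actKY := kAct G q
  have hval : ∀ (g : G) (u : (ZMod q)ˣ) (y : {y : G // orderOf y = q}),
      (((g, u) : G × (ZMod q)ˣ) • y).1 = g * y.1 ^ (u : ZMod q).val * g⁻¹ := fun _ _ _ => rfl
  have hcards : Nat.card (Σ y : {y : G // orderOf y = q},
      {z : G // z * y.1 = y.1 * z ∧ z ^ m = 1})
      = ∑ y : {y : G // orderOf y = q}, Nat.card {z : G // z * y.1 = y.1 * z ∧ z ^ m = 1} := by
    rw [Nat.card_eq_fintype_card, Fintype.card_sigma]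
    apply Finset.sum_congr rfl
    intro y _
    exact (Nat.card_eq_fintype_card).symm
  rw [hcards]
  have hinv : ∀ (k : G × (ZMod q)ˣ) (y : {y : G // orderOf y = q}),
      (fun y : {y : G // orderOf y = q} =>
        Nat.card {z : G // z * y.1 = y.1 * z ∧ z ^ m = 1}) (k • y)
      = Nat.card {z : G // z * y.1 = y.1 * z ∧ z ^ m = 1} := by
    rintro ⟨g, u⟩ y
    apply Nat.card_congr
    refine Equiv.symm ⟨fun z => ⟨g * z.1 * g⁻¹, ?_, ?_⟩, fun w => ⟨g⁻¹ * w.1 * g, ?_, ?_⟩, ?_, ?_⟩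
    · rcases z with ⟨z, hz1, hz2⟩
      have hcy : Commute z (y.1 ^ (u : ZMod q).val) := Commute.pow_right hz1 _
      show (g * z * g⁻¹) * (((g, u) : G × (ZMod q)ˣ) • y).1
        = (((g, u) : G × (ZMod q)ˣ) • y).1 * (g * z * g⁻¹)
      rw [hval]
      exact commute_conj hcy g
    · rcases z with ⟨z, hz1, hz2⟩
      show (g * z * g⁻¹) ^ m = 1
      rw [conj_pow, hz2, mul_one, mul_inv_cancel]
    · rcases w with ⟨w, hw1, hw2⟩
      have hcw : Commute w (g * y.1 ^ (u : ZMod q).val * g⁻¹) := by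
        rw [Commute, SemiconjBy, ← hval g u y]
        exact hw1
      have h3 : Commute (g⁻¹ * w * g) (g⁻¹ * (g * y.1 ^ (u : ZMod q).val * g⁻¹) * g) := by
        have := commute_conj hcw g⁻¹
        rwa [inv_inv] at this
      have h4 : g⁻¹ * (g * y.1 ^ (u : ZMod q).val * g⁻¹) * g = y.1 ^ (u : ZMod q).val := by
        group
      rw [h4] at h3
      exact hyrec y.1 y.2 u _ h3
    · rcases w with ⟨w, hw1, hw2⟩
      show (g⁻¹ * w * g) ^ m = 1
      have : g⁻¹ * w * g = g⁻¹ * w * (g⁻¹)⁻¹ := by rw [inv_inv]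
      rw [this, conj_pow, hw2, mul_one, inv_inv, inv_mul_cancel]
    · intro z
      apply Subtype.ext
      show g⁻¹ * (g * z.1 * g⁻¹) * g = z.1
      group
    · intro w
      apply Subtype.ext
      show g * (g⁻¹ * w.1 * g) * g⁻¹ = w.1
      group
  have hper : ∀ y₀ : {y : G // orderOf y = q},
      p ^ b * m ∣ Nat.card (MulAction.orbit (G × (ZMod q)ˣ) y₀)
        * Nat.card {z : G // z * y₀.1 = y₀.1 * z ∧ z ^ m = 1} := by
    intro y₀
    set S := MulAction.stabilizer (G × (ZMod q)ˣ) y₀ with hSdef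
    have hmemS : ∀ (g : G) (u : (ZMod q)ˣ),
        ((g, u) ∈ S ↔ g * y₀.1 ^ (u : ZMod q).val * g⁻¹ = y₀.1) := by
      intro g u
      rw [hSdef, MulAction.mem_stabilizer_iff]
      constructor
      · intro h
        have := congrArg Subtype.val h
        rwa [hval] at this
      · intro h
        apply Subtype.ext
        rw [hval]
        exact h
    have hUcard : Nat.card (ZMod q)ˣ = p ^ b * (p - 1) := by
      rw [Nat.card_eq_fintype_card, ZMod.card_units_eq_totient q, hq,
        Nat.totient_prime_pow hp (Nat.succ_pos b)]
      simp
    have hOS : Nat.card (MulAction.orbit (G × (ZMod q)ˣ) y₀) * Nat.card S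
        = Nat.card G * (p ^ b * (p - 1)) := by
      have hKprod : Nat.card G * (p ^ b * (p - 1)) = Nat.card (G × (ZMod q)ˣ) := by
        rw [Nat.card_prod, hUcard]
      rw [hKprod]
      rw [Nat.card_eq_fintype_card (α := MulAction.orbit (G × (ZMod q)ˣ) y₀),
        Nat.card_eq_fintype_card (α := ↥S), Nat.card_eq_fintype_card (α := G × (ZMod q)ˣ)]
      exact MulAction.card_orbit_mul_card_stabilizer_eq_card_group _ _
    set π : ↥S →* (ZMod q)ˣ := (MonoidHom.snd G (ZMod q)ˣ).comp S.subtype with hπ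
    have hSsplit : Nat.card S = Nat.card (MonoidHom.range π) * Nat.card (MonoidHom.ker π) := by
      rw [Subgroup.card_eq_card_quotient_mul_card_subgroup π.ker]
      congr 1
      exact Nat.card_congr (QuotientGroup.quotientKerEquivRange π).toEquiv
    have hwdvd : Nat.card (MonoidHom.range π) ∣ p ^ b * (p - 1) := by
      rw [← hUcard]
      exact Subgroup.card_subgroup_dvd_card _
    have hmemC : ∀ g : G, g ∈ Subgroup.centralizer {y₀.1} ↔ g * y₀.1 = y₀.1 * g :=
      fun g => Subgroup.mem_centralizer_singleton_iff
    have hkerC : Nat.card (MonoidHom.ker π) = Nat.card (Subgroup.centralizer {y₀.1}) := by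
      apply Nat.card_congr
      refine Equiv.ofBijective (fun e => ⟨(e.1.1).1, ?_⟩) ⟨?_, ?_⟩
      · have hu : (e.1.1).2 = 1 := MonoidHom.mem_ker.mp e.2
        have hs := (hmemS (e.1.1).1 (e.1.1).2).mp e.1.2
        rw [hu] at hs
        rw [Units.val_one, ZMod.val_one q, pow_one] at hs
        exact (hmemC _).mpr (mul_inv_eq_iff_eq_mul.mp hs)
      · rintro e e' h
        simp only [Subtype.mk.injEq] at h
        have hu : (e.1.1).2 = 1 := MonoidHom.mem_ker.mp e.2
        have hu' : (e'.1.1).2 = 1 := MonoidHom.mem_ker.mp e'.2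
        exact Subtype.ext (Subtype.ext (Prod.ext h (hu.trans hu'.symm)))
      · rintro ⟨g, hg⟩
        have hgS : ((g, (1 : (ZMod q)ˣ)) : G × (ZMod q)ˣ) ∈ S := by
          rw [hmemS g 1, Units.val_one, ZMod.val_one q, pow_one]
          exact mul_inv_eq_iff_eq_mul.mpr ((hmemC g).mp hg)
        refine ⟨⟨⟨(g, 1), hgS⟩, MonoidHom.mem_ker.mpr rfl⟩, rfl⟩
    set φ : ↥S →* G := (MonoidHom.fst G (ZMod q)ˣ).comp S.subtype with hφ
    have hφinj : Function.Injective φ := by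
      intro s t h
      have hs := (hmemS (s.1).1 (s.1).2).mp s.2
      have ht := (hmemS (t.1).1 (t.1).2).mp t.2
      have hg : (s.1).1 = (t.1).1 := h
      rw [← hg] at ht
      have hyy : y₀.1 ^ ((s.1).2 : ZMod q).val = y₀.1 ^ ((t.1).2 : ZMod q).val :=
        mul_left_cancel (mul_right_cancel (hs.trans ht.symm))
      have hmod := pow_eq_pow_iff_modEq.mp hyy
      rw [y₀.2] at hmod
      have hveq : ((s.1).2 : ZMod q).val = ((t.1).2 : ZMod q).val := by
        have h1 := ZMod.val_lt ((s.1).2 : ZMod q)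
        have h2 := ZMod.val_lt ((t.1).2 : ZMod q)
        unfold Nat.ModEq at hmod
        rwa [Nat.mod_eq_of_lt h1, Nat.mod_eq_of_lt h2] at hmod
      have hueq : (s.1).2 = (t.1).2 := Units.ext (ZMod.val_injective q hveq)
      exact Subtype.ext (Prod.ext hg hueq)
    have hSG : Nat.card S ∣ Nat.card G := by
      rw [Nat.card_congr (MonoidHom.ofInjective hφinj).toEquiv]
      exact Subgroup.card_subgroup_dvd_card _
    have hSpos : 0 < Nat.card S := Nat.card_pos
    rw [hkerC] at hSsplit
    exact arith_key hp hpm hm hSpos hOS hSsplit hwdvd hSG hmG (hIH y₀.1 y₀.2)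
  exact dvd_sum_of_orbits
    (fun y : {y : G // orderOf y = q} =>
      Nat.card {z : G // z * y.1 = y.1 * z ∧ z ^ m = 1}) hinv (p ^ b * m) hper

end BigOrbit

section Main

universe u

lemma frobenius_key : ∀ (N : ℕ) (G : Type u) [Group G] [Finite G], Nat.card G = N →
    ∀ (k n : ℕ), n * k = Nat.card G → n ∣ Nat.card {x : G // x ^ n = 1} := by
  intro N
  induction N using Nat.strong_induction_on with
  | _ N ihN =>
  intro G _ _ hcardN k
  induction k using Nat.strong_induction_on with
  | _ k ihk =>
  intro n hnk
  have hGpos : 0 < Nat.card G := Nat.card_pos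
  rcases Nat.eq_zero_or_pos k with hk0 | hkpos
  · subst hk0; rw [mul_zero] at hnk; omega
  rcases eq_or_lt_of_le (Nat.succ_le_of_lt hkpos) with hk1 | hk2
  · -- k = 1 : n = |G|
    have hn : n = Nat.card G := by rw [← hnk, ← hk1]; simp
    have hcg : Nat.card {x : G // x ^ n = 1} = Nat.card G :=
      Nat.card_congr (Equiv.subtypeUnivEquiv (fun x => by rw [hn]; exact pow_card_eq_one'))
    rw [hcg, hn]
  · -- k ≥ 2
    set p := k.minFac with hpdef
    have hp : p.Prime := Nat.minFac_prime (by omega)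
    have hpk : p ∣ k := Nat.minFac_dvd k
    have hnpos : 0 < n := by
      rcases Nat.eq_zero_or_pos n with h | h
      · subst h; rw [zero_mul] at hnk; omega
      · exact h
    set b := n.factorization p with hb
    set m := ordCompl[p] n with hmdef
    have hnfac : p ^ b * m = n := Nat.ordProj_mul_ordCompl_eq_self n p
    have hpm : ¬ p ∣ m := Nat.not_dvd_ordCompl hp hnpos.ne'
    have hmpos : 0 < m := Nat.ordCompl_pos p hnpos.ne'
    have hmG : m ∣ Nat.card G := dvd_trans (Dvd.intro_left _ hnfac) ⟨k, hnk.symm⟩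
    have hk' : (n * p) * (k / p) = Nat.card G := by
      rw [mul_assoc, Nat.mul_div_cancel' hpk, hnk]
    have hnp_dvd : (n * p) ∣ Nat.card {x : G // x ^ (n * p) = 1} :=
      ihk (k / p) (Nat.div_lt_self hkpos hp.one_lt) (n * p) hk'
    have hsplit := card_and_split (fun x : G => x ^ (n * p) = 1) (fun x : G => x ^ n = 1)
    have hfirst : Nat.card {x : G // x ^ (n * p) = 1 ∧ x ^ n = 1}
        = Nat.card {x : G // x ^ n = 1} :=
      Nat.card_congr (Equiv.subtypeEquivRight (fun x =>
        ⟨fun h => h.2, fun h => ⟨by rw [pow_mul, h, one_pow], h⟩⟩))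
    -- the induction input for centralizers / quotients
    have hIH : ∀ y : G, orderOf y = p ^ (b + 1) →
        Nat.gcd m (Nat.card (Subgroup.centralizer {y})) ∣
          Nat.card {z : G // z * y = y * z ∧ z ^ m = 1} := by
      intro y hy
      set C := Subgroup.centralizer {y} with hC
      have hcc : Nat.card {z : G // z * y = y * z ∧ z ^ m = 1}
          = Nat.card {w : ↥C // w ^ m = 1} := by
        apply Nat.card_congr
        refine (Equiv.subtypeEquivRight (fun z => ?_)).trans
          (((Equiv.subtypeSubtypeEquivSubtypeInter (· ∈ C) (fun z => z ^ m = 1)).symm).trans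
            (Equiv.subtypeEquivRight (fun w => ?_)))
        · exact ⟨fun h => ⟨Subgroup.mem_centralizer_singleton_iff.mpr h.1, h.2⟩,
            fun h => ⟨Subgroup.mem_centralizer_singleton_iff.mp h.1, h.2⟩⟩
        · constructor
          · intro h
            apply Subtype.ext
            simpa using h
          · intro h
            have := congrArg Subtype.val h
            simpa using this
      set m₁ := Nat.gcd m (Nat.card ↥C) with hm₁
      have hgcdC : Nat.card {w : ↥C // w ^ m = 1} = Nat.card {w : ↥C // w ^ m₁ = 1} :=
        Nat.card_congr (Equiv.subtypeEquivRight (fun w => pow_eq_one_iff_gcd w m))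
      rw [hcc, hgcdC]
      by_cases hCtop : C = ⊤
      · -- y is central : pass to the quotient by ⟨y⟩
        have hycen : y ∈ Subgroup.center G := by
          rw [Subgroup.mem_center_iff]
          intro g
          exact Subgroup.mem_centralizer_singleton_iff.mp (by rw [← hC, hCtop]; exact Subgroup.mem_top g)
        set P := Subgroup.zpowers y with hP
        have hPle : P ≤ Subgroup.center G := Subgroup.zpowers_le.mpr hycen
        haveI hPnormal : P.Normal := normal_of_le_center P hPle
        have hPcard : Nat.card ↥P = p ^ (b + 1) := by rw [hP, Nat.card_zpowers, hy]
        have hcop : (Nat.card ↥P).Coprime m := by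
          rw [hPcard]
          exact Nat.Coprime.pow_left _ (hp.coprime_iff_not_dvd.mpr hpm)
        have hquot := card_pow_eq_one_quotient P hPle hcop
        have hcards2 : Nat.card G = Nat.card (G ⧸ P) * Nat.card ↥P :=
          Subgroup.card_eq_card_quotient_mul_card_subgroup P
        have hQpos : 0 < Nat.card (G ⧸ P) := Nat.card_pos
        have hQlt : Nat.card (G ⧸ P) < Nat.card G := by
          rw [hcards2, hPcard]
          have h1 : 1 < p ^ (b + 1) := Nat.one_lt_pow (Nat.succ_ne_zero b) hp.one_lt
          exact (Nat.lt_mul_iff_one_lt_right hQpos).mpr h1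
        have hmQ : m ∣ Nat.card (G ⧸ P) := by
          have h1 : m ∣ Nat.card (G ⧸ P) * Nat.card ↥P := hcards2 ▸ hmG
          exact (Nat.Coprime.dvd_mul_right hcop.symm).mp h1
        have hQdvd : m ∣ Nat.card {x : G ⧸ P // x ^ m = 1} :=
          ihN (Nat.card (G ⧸ P)) (by rw [← hcardN]; exact hQlt) (G ⧸ P) rfl
            (Nat.card (G ⧸ P) / m) m (Nat.mul_div_cancel' hmQ)
        have hCcard : Nat.card ↥C = Nat.card G := by
          rw [hCtop]
          exact Nat.card_congr Subgroup.topEquiv.toEquiv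
        have hm₁m : m₁ = m := by rw [hm₁, hCcard]; exact Nat.gcd_eq_left hmG
        have htopEq : Nat.card {w : ↥C // w ^ m = 1} = Nat.card {x : G // x ^ m = 1} := by
          apply Nat.card_congr
          refine ⟨fun w => ⟨w.1.1, ?_⟩,
            fun x => ⟨⟨x.1, by rw [hCtop]; exact Subgroup.mem_top x.1⟩,
              by apply Subtype.ext; simpa using x.2⟩,
            fun w => ?_, fun x => ?_⟩
          · have h := congrArg Subtype.val w.2
            simpa using h
          · apply Subtype.ext
            apply Subtype.ext
            rfl
          · rfl
        rw [hm₁m, htopEq, ← hquot]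
        exact hQdvd
      · -- proper centralizer : induction on smaller group
        have hClt : Nat.card ↥C < Nat.card G :=
          lt_of_le_of_ne (Subgroup.card_le_card_group C)
            (fun h => hCtop (Subgroup.eq_top_of_card_eq _ h))
        exact ihN (Nat.card ↥C) (by rw [← hcardN]; exact hClt) (↥C) rfl
          (Nat.card ↥C / m₁) m₁ (Nat.mul_div_cancel' (Nat.gcd_dvd_right _ _))
    have hT := card_T_eq (G := G) (b := b) hp hpm hmpos
    have hTdvd : n ∣ Nat.card {x : G // x ^ (n * p) = 1 ∧ ¬ x ^ n = 1} := by
      have h2 := dvd_card_sigma hp hpm hmpos hmG hIH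
      rw [← hT] at h2
      rw [← hnfac]
      exact h2
    have hfn : Nat.card {x : G // x ^ (n * p) = 1}
        = Nat.card {x : G // x ^ n = 1}
          + Nat.card {x : G // x ^ (n * p) = 1 ∧ ¬ x ^ n = 1} := by
      rw [hsplit, hfirst]
    have hdvd_np : n ∣ Nat.card {x : G // x ^ (n * p) = 1} := dvd_trans ⟨p, rfl⟩ hnp_dvd
    have hfinal := Nat.dvd_sub hdvd_np hTdvd
    rw [hfn, Nat.add_sub_cancel] at hfinal
    exact hfinal

end Main

/-- Frobenius's theorem: if `m` divides the order of a finite group `G`, then `m` divides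
the number of solutions of `x^m = 1` in `G`. -/
theorem frobenius_divisibility (G : Type*) [Group G] [Finite G] (m : ℕ) (hm : 0 < m)
    (hdvd : m ∣ Nat.card G) : m ∣ Nat.card {x : G // x ^ m = 1} := by
  exact frobenius_key (Nat.card G) G rfl (Nat.card G / m) m (Nat.mul_div_cancel' hdvd)
end

section
/- Let p be a prime and n ≥ p a positive integer. Then the number of elements of the symmetric group S_n whose order divides p, namely the sum over k from 0 to ⌊n/p⌋ of n!/(k! (n-pk)! p^k), is divisible by p. -/
open Finset

/-- Division-free count of permutations consisting of `k` `p`-cycles on `p*k` points. -/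
def cycCount (p : ℕ) : ℕ → ℕ
  | 0 => 1
  | k + 1 => (p * (k + 1) - 1).descFactorial (p - 1) * cycCount p k

lemma cycCount_mul_eq (q k : ℕ) :
    cycCount (q + 1) k * (k.factorial * (q + 1) ^ k) = ((q + 1) * k).factorial := by
  induction k with
  | zero => simp [cycCount]
  | succ k ih =>
    have h3 : (q + 1) * (k + 1) - 1 = (q + 1) * k + q := by ring_nf; omega
    have h1 : ((q + 1) * k).factorial * (((q + 1) * k + q).descFactorial q)
        = ((q + 1) * k + q).factorial := by
      have := Nat.factorial_mul_descFactorial (n := (q + 1) * k + q) (k := q)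
        (Nat.le_add_left _ _)
      simpa using this
    have h2 : (q + 1) * (k + 1) = ((q + 1) * k + q) + 1 := by ring
    rw [cycCount, h3, h2, Nat.add_sub_cancel, Nat.factorial_succ ((q + 1) * k + q), ← h1,
      Nat.factorial_succ k, pow_succ, ← ih]
    ring

lemma term_eq (q k n : ℕ) (hkn : (q + 1) * k ≤ n) :
    n.factorial / (k.factorial * (n - (q + 1) * k).factorial * (q + 1) ^ k)
      = n.choose ((q + 1) * k) * cycCount (q + 1) k := by
  apply Nat.div_eq_of_eq_mul_left
  · positivity
  · have h1 := Nat.choose_mul_factorial_mul_factorial hkn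
    have h2 := cycCount_mul_eq q k
    calc n.factorial = n.choose ((q + 1) * k) * ((q + 1) * k).factorial
          * (n - (q + 1) * k).factorial := h1.symm
      _ = n.choose ((q + 1) * k) * (cycCount (q + 1) k * (k.factorial * (q + 1) ^ k))
          * (n - (q + 1) * k).factorial := by rw [h2]
      _ = n.choose ((q + 1) * k) * cycCount (q + 1) k
          * (k.factorial * (n - (q + 1) * k).factorial * (q + 1) ^ k) := by ring

lemma desc_cast {p : ℕ} [Fact p.Prime] {N : ℕ} (hN : p ≤ N) (hd : p ∣ N) :
    (((N - 1).descFactorial (p - 1) : ℕ) : ZMod p)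
      = ∏ i ∈ Finset.range (p - 1), (-(i + 1) : ZMod p) := by
  rw [Nat.descFactorial_eq_prod_range, Nat.cast_prod]
  apply Finset.prod_congr rfl
  intro i hi
  rw [Finset.mem_range] at hi
  have hp2 : 2 ≤ p := (Fact.out : p.Prime).two_le
  have h1 : N - 1 - i = N - (i + 1) := by omega
  have h2 : i + 1 ≤ N := by omega
  rw [h1, Nat.cast_sub h2]
  have hz : (N : ZMod p) = 0 := (ZMod.natCast_eq_zero_iff _ _).mpr hd
  rw [hz]
  push_cast
  ring

lemma prod_neg_eq_neg_one {p : ℕ} [Fact p.Prime] :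
    ∏ i ∈ Finset.range (p - 1), (-(i + 1) : ZMod p) = -1 := by
  have h := desc_cast (p := p) (N := p) le_rfl dvd_rfl
  rw [Nat.descFactorial_self] at h
  rw [← h, ZMod.wilsons_lemma]

lemma cycCount_cast {p : ℕ} [Fact p.Prime] (k : ℕ) :
    ((cycCount p k : ℕ) : ZMod p) = (-1) ^ k := by
  induction k with
  | zero => simp [cycCount]
  | succ k ih =>
    have hp1 : 1 ≤ p := (Fact.out : p.Prime).one_le
    have hd : (((p * (k + 1) - 1).descFactorial (p - 1) : ℕ) : ZMod p) = -1 := by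
      rw [desc_cast (N := p * (k + 1)) (Nat.le_mul_of_pos_right p (by omega))
        (Dvd.intro _ rfl), prod_neg_eq_neg_one]
    rw [cycCount, Nat.cast_mul, hd, ih, pow_succ]
    ring

lemma lucas_step {p : ℕ} [Fact p.Prime] (n k : ℕ) :
    ((n.choose (p * k) : ℕ) : ZMod p) = ((n / p).choose k : ℕ) := by
  have hp1 : 0 < p := (Fact.out : p.Prime).pos
  have h := Choose.choose_modEq_choose_mod_mul_choose_div_nat (p := p) (n := n) (k := p * k)
  have h2 := (ZMod.natCast_eq_natCast_iff _ _ _).mpr h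
  rw [h2, Nat.mul_mod_right, Nat.mul_div_cancel_left _ hp1, Nat.choose_zero_right, one_mul]

/-- The number of elements of `S_n` of order dividing a prime `p ≤ n`, counted as the sum
over `k` of the number of elements made of `k` `p`-cycles and `n - pk` fixed points,
is divisible by `p`. -/
theorem symm_group_order_p_count_div (p n : ℕ) (hp : p.Prime) (hpn : p ≤ n) :
    p ∣ ∑ k ∈ Finset.range (n / p + 1),
      n.factorial / (k.factorial * (n - p * k).factorial * p ^ k) := by
  haveI : Fact p.Prime := ⟨hp⟩
  have hp1 : 0 < p := hp.pos
  obtain ⟨q, rfl⟩ : ∃ q, p = q + 1 := ⟨p - 1, by omega⟩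
  have hsum : ∑ k ∈ Finset.range (n / (q + 1) + 1),
      n.factorial / (k.factorial * (n - (q + 1) * k).factorial * (q + 1) ^ k)
      = ∑ k ∈ Finset.range (n / (q + 1) + 1),
        n.choose ((q + 1) * k) * cycCount (q + 1) k := by
    apply Finset.sum_congr rfl
    intro k hk
    rw [Finset.mem_range] at hk
    have hkn : (q + 1) * k ≤ n := by
      rw [mul_comm]
      exact (Nat.le_div_iff_mul_le hp1).mp (by omega)
    exact term_eq q k n hkn
  rw [hsum, ← ZMod.natCast_eq_zero_iff]
  push_cast
  have hterm : ∀ k ∈ Finset.range (n / (q + 1) + 1),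
      ((n.choose ((q + 1) * k) : ZMod (q + 1)) * (cycCount (q + 1) k : ZMod (q + 1)))
      = ((n / (q + 1)).choose k : ZMod (q + 1)) * (-1) ^ k := by
    intro k _
    rw [lucas_step, cycCount_cast]
  rw [Finset.sum_congr rfl hterm]
  have h0 : n / (q + 1) ≠ 0 := by
    have : 1 ≤ n / (q + 1) := (Nat.one_le_div_iff hp1).mpr hpn
    omega
  have hz := Int.alternating_sum_range_choose_of_ne h0
  have hz2 : ((∑ i ∈ Finset.range (n / (q + 1) + 1),
      (-1 : ℤ) ^ i * ((n / (q + 1)).choose i : ℤ) : ℤ) : ZMod (q + 1)) = 0 := by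
    rw [hz]; simp
  push_cast at hz2
  rw [← hz2]
  apply Finset.sum_congr rfl
  intro k _
  ring
end

section
/- Let p ≡ 1 (mod 4) be prime. Define u(0) = 1 and for n ≥ 1, u(n) = ∏_{i=1}^{n}(4i-1)^2 − Σ_{m=0}^{n-1} C(2n+1, 2m+1) · (∏_{j=1}^{n-m}(4j-3)^2) · u(m). Then u((p-1)/2) ≡ ∏_{i=1}^{(p-1)/2}(4i-1)^2 (mod p), i.e. u((p-1)/2) ≡ 3²·7²···(2p-3)² (mod p). -/
/-- For a prime `p ≡ 1 (mod 4)`, Romik's sequence `u` (given by its recurrence) satisfies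
`u((p-1)/2) ≡ ∏_{i=1}^{(p-1)/2} (4i-1)^2 (mod p)`. -/
theorem u_at_half_p_minus_one (p : ℕ) (hp : p.Prime) (hp4 : p % 4 = 1)
    (u : ℕ → ℤ) (hu0 : u 0 = 1)
    (hu : ∀ n, 1 ≤ n → u n = (∏ i ∈ Finset.Icc 1 n, (4 * (i : ℤ) - 1) ^ 2)
      - ∑ m ∈ Finset.range n, ((2 * n + 1).choose (2 * m + 1) : ℤ)
          * (∏ j ∈ Finset.Icc 1 (n - m), (4 * (j : ℤ) - 3) ^ 2) * u m) :
    u ((p - 1) / 2) ≡ ∏ i ∈ Finset.Icc 1 ((p - 1) / 2), (4 * (i : ℤ) - 1) ^ 2 [ZMOD (p : ℤ)] := by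
  have hp2 := hp.two_le
  have hp5 : 5 ≤ p := by omega
  set N := (p - 1) / 2 with hNdef
  have hN1 : 1 ≤ N := by omega
  have h2N : 2 * N + 1 = p := by omega
  rw [hu N hN1]
  have hdvd : (p : ℤ) ∣ ∑ m ∈ Finset.range N, ((2 * N + 1).choose (2 * m + 1) : ℤ)
      * (∏ j ∈ Finset.Icc 1 (N - m), (4 * (j : ℤ) - 3) ^ 2) * u m := by
    refine Finset.dvd_sum fun m hm => ?_
    have hm' := Finset.mem_range.mp hm
    have hc : p ∣ (2 * N + 1).choose (2 * m + 1) := by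
      rw [h2N]
      exact hp.dvd_choose_self (by omega) (by omega)
    exact Dvd.dvd.mul_right (Dvd.dvd.mul_right (Int.natCast_dvd_natCast.mpr hc) _) _
  have := (Int.ModEq.refl (∏ i ∈ Finset.Icc 1 N, (4 * (i : ℤ) - 1) ^ 2)).sub
    ((Int.modEq_zero_iff_dvd.mpr hdvd))
  simpa using this
end

section
/- Let p ≡ 1 (mod 4) be prime and let u(n) be defined by u(0)=1 and u(n) = ∏_{i=1}^{n}(4i-1)^2 − Σ_{m=0}^{n-1} C(2n+1,2m+1) (∏_{j=1}^{n-m}(4j-3)^2) u(m). Then u((p+1)/2) ≡ 0 (mod p). -/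
/-- For a prime `p ≡ 1 (mod 4)`, Romik's sequence `u` satisfies `u((p+1)/2) ≡ 0 (mod p)`. -/
theorem u_at_half_p_plus_one (p : ℕ) (hp : p.Prime) (hp4 : p % 4 = 1)
    (u : ℕ → ℤ) (hu0 : u 0 = 1)
    (hu : ∀ n, 1 ≤ n → u n = (∏ i ∈ Finset.Icc 1 n, (4 * (i : ℤ) - 1) ^ 2)
      - ∑ m ∈ Finset.range n, ((2 * n + 1).choose (2 * m + 1) : ℤ)
          * (∏ j ∈ Finset.Icc 1 (n - m), (4 * (j : ℤ) - 3) ^ 2) * u m) :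
    u ((p + 1) / 2) ≡ 0 [ZMOD (p : ℤ)] := by
  have hp2 : 2 ≤ p := hp.two_le
  obtain ⟨t, ht⟩ : ∃ t, p = 4 * t + 1 := ⟨p / 4, by omega⟩
  have ht1 : 1 ≤ t := by omega
  have hn : (p + 1) / 2 = 2 * t + 1 := by omega
  rw [Int.modEq_zero_iff_dvd, ← ZMod.intCast_zmod_eq_zero_iff_dvd, hn]
  have hP : ((p : ℕ) : ZMod p) = 0 := ZMod.natCast_self p
  have h0 : 4 * (t : ZMod p) + 1 = 0 := by
    have h : ((4 * t + 1 : ℕ) : ZMod p) = 0 := by rw [← ht]; exact hP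
    push_cast at h
    exact h
  -- the recurrence cast into ZMod p
  have hcast : ∀ n, 1 ≤ n → ((u n : ZMod p)) =
      (∏ i ∈ Finset.Icc 1 n, (4 * (i : ZMod p) - 1) ^ 2)
      - ∑ m ∈ Finset.range n, ((2 * n + 1).choose (2 * m + 1) : ZMod p)
          * (∏ j ∈ Finset.Icc 1 (n - m), (4 * (j : ZMod p) - 3) ^ 2) * (u m : ZMod p) := by
    intro n h
    rw [hu n h]
    push_cast
    ring
  -- value of u (2t) : all binomials C(p, odd<p) vanish
  have hv2t : ((u (2 * t) : ZMod p)) = ∏ i ∈ Finset.Icc 1 (2 * t), (4 * (i : ZMod p) - 1) ^ 2 := by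
    rw [hcast (2 * t) (by omega)]
    rw [Finset.sum_eq_zero, sub_zero]
    intro m hm
    rw [Finset.mem_range] at hm
    have hdvd : p ∣ (2 * (2 * t) + 1).choose (2 * m + 1) := by
      have : 2 * (2 * t) + 1 = p := by omega
      rw [this]
      exact hp.dvd_choose_self (by omega) (by omega)
    rw [(ZMod.natCast_eq_zero_iff _ _).mpr hdvd]
    ring
  -- value of u (2t+1)
  rw [hcast (2 * t + 1) (by omega)]
  -- the sum reduces to the m = 2t term
  rw [Finset.sum_eq_single_of_mem (2 * t) (by simp)]
  · -- main computation
    have hb : ((2 * (2 * t + 1) + 1).choose (2 * (2 * t) + 1) : ZMod p) = 1 := by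
      have e1 : 2 * (2 * t + 1) + 1 = p + 2 := by omega
      have e2 : 2 * (2 * t) + 1 = p := by omega
      rw [e1, e2]
      have e3 : (p + 2).choose p = (p + 2) * (2 * t + 1) := by
        have hsymm := Nat.choose_symm (n := p + 2) (k := 2) (by omega)
        have e4 : p + 2 - 2 = p := by omega
        rw [e4] at hsymm
        rw [hsymm, Nat.choose_two_right]
        have h2 : (p + 2) * (p + 2 - 1) / 2 = (p + 2) * ((p + 2 - 1) / 2) :=
          Nat.mul_div_assoc _ (by omega)
        rw [h2, show (p + 2 - 1) / 2 = 2 * t + 1 by omega]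
      rw [e3]
      push_cast
      linear_combination (2 * (t : ZMod p) + 1) * hP + h0
    rw [hb]
    have hicc : (2 * t + 1) - 2 * t = 1 := by omega
    rw [hicc]
    have hprod1 : (∏ j ∈ Finset.Icc (1:ℕ) 1, (4 * (j : ZMod p) - 3) ^ 2) = 1 := by
      rw [Finset.Icc_self, Finset.prod_singleton]
      norm_num
    rw [hprod1, hv2t]
    -- now goal : ∏_{Icc 1 (2t+1)} - 1 * ∏_{Icc 1 (2t)} * ... = 0
    rw [show (2 * t + 1) = (2 * t) + 1 from rfl,
      Finset.prod_Icc_succ_top (by omega) (fun i : ℕ => (4 * (i : ZMod p) - 1) ^ 2)]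
    push_cast
    linear_combination (∏ i ∈ Finset.Icc 1 (2 * t), (4 * (i : ZMod p) - 1) ^ 2) *
      (16 * (t : ZMod p) + 8) * h0
  · -- other terms vanish
    intro m hm hne
    rw [Finset.mem_range] at hm
    rcases Nat.eq_zero_or_pos m with hm0 | hm1
    · -- m = 0 : the product contains the factor at j = t+1 which is p ≡ 0
      subst hm0
      have : (∏ j ∈ Finset.Icc 1 (2 * t + 1 - 0), (4 * (j : ZMod p) - 3) ^ 2) = 0 := by
        apply Finset.prod_eq_zero (i := t + 1)
        · simp only [Nat.sub_zero, Finset.mem_Icc]; omega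
        · push_cast
          linear_combination (4 * (t : ZMod p) + 1) * h0
      rw [this]
      ring
    · have hdvd : p ∣ (2 * (2 * t + 1) + 1).choose (2 * m + 1) := by
        have e1 : 2 * (2 * t + 1) + 1 = p + 2 := by omega
        rw [e1]
        exact hp.dvd_choose (by omega) (by omega) (by omega)
      rw [(ZMod.natCast_eq_zero_iff _ _).mpr hdvd]
      ring
end

section
/- Let p ≡ 1 (mod 4) be prime and let u(n) be defined by u(0)=1 and u(n) = ∏_{i=1}^{n}(4i-1)^2 − Σ_{m=0}^{n-1} C(2n+1,2m+1) (∏_{j=1}^{n-m}(4j-3)^2) u(m). Then u(n) ≡ 0 (mod p) for all n ≥ (p+1)/2. -/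
open Finset

lemma scherer_B_zero (p : ℕ) (hp4 : p % 4 = 1) (hp5 : 5 ≤ p) (k : ℕ)
    (hk : (p + 3) / 4 ≤ k) :
    ∏ j ∈ Finset.Icc 1 k, (4 * (j : ZMod p) - 3) ^ 2 = 0 := by
  apply Finset.prod_eq_zero (i := (p + 3) / 4) (by simp [Finset.mem_Icc]; omega)
  have e : 4 * ((p + 3) / 4) = p + 3 := by omega
  have e' := congrArg (Nat.cast : ℕ → ZMod p) e
  push_cast at e'
  have hp0 : ((p : ℕ) : ZMod p) = 0 := ZMod.natCast_self p
  have : 4 * (((p + 3) / 4 : ℕ) : ZMod p) - 3 = 0 := by linear_combination e' + hp0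
  rw [this]
  ring

lemma scherer_A_split (p : ℕ) (hp4 : p % 4 = 1) (hp5 : 5 ≤ p) :
    ∀ n, (p - 1) / 2 ≤ n →
      (∏ i ∈ Finset.Icc 1 n, (4 * (i : ZMod p) - 1) ^ 2) =
        (∏ i ∈ Finset.Icc 1 ((p - 1) / 2), (4 * (i : ZMod p) - 1) ^ 2) *
          ∏ j ∈ Finset.Icc 1 (n - (p - 1) / 2), (4 * (j : ZMod p) - 3) ^ 2 := by
  intro n hn
  induction n, hn using Nat.le_induction with
  | base => rw [Nat.sub_self]; simp
  | succ n hn ih =>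
    have h2 : n + 1 - (p - 1) / 2 = (n - (p - 1) / 2) + 1 := by omega
    rw [Finset.prod_Icc_succ_top (by omega), ih, h2,
      Finset.prod_Icc_succ_top (by omega)]
    have key : (4 * ((n + 1 : ℕ) : ZMod p) - 1) = 4 * (((n - (p - 1) / 2 + 1 : ℕ)) : ZMod p) - 3 := by
      have e : (4 * (n + 1) + 2 : ℕ) = 4 * (n - (p - 1) / 2 + 1) + 2 * p := by omega
      have e' := congrArg (Nat.cast : ℕ → ZMod p) e
      push_cast at e' ⊢
      linear_combination e' + 2 * (ZMod.natCast_self p)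
    rw [key]
    ring

lemma scherer_choose_lt (p a b : ℕ) [Fact p.Prime] (ha : a < p) (hb : b < p) :
    (((p + a).choose b : ℕ) : ZMod p) = ((a.choose b : ℕ) : ZMod p) := by
  have H := Choose.choose_modEq_choose_mod_mul_choose_div_nat (p := p) (n := p + a) (k := b)
  have h1 : (p + a) % p = a := by rw [Nat.add_comm, Nat.add_mod_right, Nat.mod_eq_of_lt ha]
  have h2 : (p + a) / p = 1 := by
    rw [Nat.add_comm, Nat.add_div_right _ (by omega), Nat.div_eq_of_lt ha]
  have h3 : b % p = b := Nat.mod_eq_of_lt hb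
  have h4 : b / p = 0 := Nat.div_eq_of_lt hb
  rw [h1, h2, h3, h4] at H
  simpa using (ZMod.natCast_eq_natCast_iff _ _ _).mpr H

lemma scherer_choose_self (p a : ℕ) [Fact p.Prime] (ha : a < p) :
    (((p + a).choose p : ℕ) : ZMod p) = 1 := by
  have hp1 : 0 < p := by omega
  have H := Choose.choose_modEq_choose_mod_mul_choose_div_nat (p := p) (n := p + a) (k := p)
  have h1 : (p + a) % p = a := by rw [Nat.add_comm, Nat.add_mod_right, Nat.mod_eq_of_lt ha]
  have h2 : (p + a) / p = 1 := by
    rw [Nat.add_comm, Nat.add_div_right _ hp1, Nat.div_eq_of_lt ha]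
  rw [h1, h2, Nat.mod_self, Nat.div_self hp1] at H
  simpa using (ZMod.natCast_eq_natCast_iff _ _ _).mpr H

/-- For a prime `p ≡ 1 (mod 4)`, Romik's sequence `u` vanishes mod `p` for all
`n ≥ (p+1)/2` (Scherer's conjecture). -/
theorem u_vanishes (p : ℕ) (hp : p.Prime) (hp4 : p % 4 = 1)
    (u : ℕ → ℤ) (hu0 : u 0 = 1)
    (hu : ∀ n, 1 ≤ n → u n = (∏ i ∈ Finset.Icc 1 n, (4 * (i : ℤ) - 1) ^ 2)
      - ∑ m ∈ Finset.range n, ((2 * n + 1).choose (2 * m + 1) : ℤ)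
          * (∏ j ∈ Finset.Icc 1 (n - m), (4 * (j : ℤ) - 3) ^ 2) * u m) :
    ∀ n, (p + 1) / 2 ≤ n → u n ≡ 0 [ZMOD (p : ℤ)] := by
  haveI : Fact p.Prime := ⟨hp⟩
  have hp2 := hp.two_le
  have hp5 : 5 ≤ p := by omega
  set h := (p - 1) / 2 with hh
  suffices H : ∀ n, h + 1 ≤ n → ((u n : ℤ) : ZMod p) = 0 by
    intro n hn
    have := H n (by omega)
    rw [ZMod.intCast_zmod_eq_zero_iff_dvd] at this
    exact Int.modEq_zero_iff_dvd.mpr this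
  have uhalf : ((u h : ℤ) : ZMod p) = ∏ i ∈ Finset.Icc 1 h, (4 * (i : ZMod p) - 1) ^ 2 := by
    rw [hu h (by omega)]
    push_cast
    rw [sub_eq_self]
    apply Finset.sum_eq_zero
    intro m hm
    rw [Finset.mem_range] at hm
    have hz : (((2 * h + 1).choose (2 * m + 1) : ℕ) : ZMod p) = 0 := by
      rw [ZMod.natCast_eq_zero_iff, show 2 * h + 1 = p by omega]
      exact hp.dvd_choose_self (by omega) (by omega)
    rw [hz]; ring
  intro n
  induction n using Nat.strong_induction_on with
  | _ n IH =>
    intro hn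
    rw [hu n (by omega)]
    push_cast
    rw [sub_eq_zero]
    rw [Finset.sum_eq_single_of_mem h (Finset.mem_range.mpr (by omega))]
    · rw [uhalf, show 2 * h + 1 = p by omega]
      rcases le_or_gt (n - h) ((p - 1) / 4) with hc | hc
      · rw [show 2 * n + 1 = p + 2 * (n - h) by omega,
          scherer_choose_self p _ (by omega),
          scherer_A_split p hp4 hp5 n (by omega)]
        ring
      · rw [scherer_A_split p hp4 hp5 n (by omega),
          scherer_B_zero p hp4 hp5 (n - h) (by omega)]
        ring
    · intro m hm hne
      rw [Finset.mem_range] at hm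
      rcases lt_or_ge m h with hmh | hmh
      · rcases le_or_gt ((p + 3) / 4) (n - m) with hb | hb
        · rw [scherer_B_zero p hp4 hp5 (n - m) hb]; ring
        · rw [show 2 * n + 1 = p + 2 * (n - h) by omega,
            scherer_choose_lt p _ _ (by omega) (by omega),
            Nat.choose_eq_zero_of_lt (by omega)]
          push_cast; ring
      · rw [IH m hm (by omega)]; ring
end

section
/- Let p ≡ 1 (mod 4) be prime and define v(0) = 1 and, for n ≥ 1, v(n) = 2^{n-1} ∏_{i=1}^{n}(4i-3)^2 − (1/2) Σ_{m=1}^{n-1} C(2n, 2m) v(m) v(n-m). Then v(n) ≡ 0 (mod p) for all n ≥ (p+1)/2. -/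
/-- For a prime `p ≡ 1 (mod 4)`, Romik's sequence `v` (defined by
`v(n) = 2^{n-1} ∏_{i=1}^n (4i-3)^2 − (1/2) Σ_{m=1}^{n-1} C(2n,2m) v(m) v(n-m)`, stated
here with both sides multiplied by `2`) vanishes mod `p` for all `n ≥ (p+1)/2`. -/
theorem v_vanishes (p : ℕ) (hp : p.Prime) (hp4 : p % 4 = 1)
    (v : ℕ → ℤ) (hv0 : v 0 = 1)
    (hv : ∀ n, 1 ≤ n → 2 * v n = 2 ^ n * (∏ i ∈ Finset.Icc 1 n, (4 * (i : ℤ) - 3) ^ 2)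
      - ∑ m ∈ Finset.Icc 1 (n - 1), ((2 * n).choose (2 * m) : ℤ) * v m * v (n - m)) :
    ∀ n, (p + 1) / 2 ≤ n → v n ≡ 0 [ZMOD (p : ℤ)] := by
  have hp2 := hp.two_le
  have hp5 : 5 ≤ p := by
    rcases Nat.lt_or_ge p 5 with h | h
    · interval_cases p <;> simp_all
    · exact h
  obtain ⟨k, hk⟩ : ∃ k, p = 4 * k + 1 := ⟨p / 4, by omega⟩
  have hk1 : 1 ≤ k := by omega
  have hq : (p + 1) / 2 = 2 * k + 1 := by omega
  have hpint : Prime (p : ℤ) := Nat.prime_iff_prime_int.mp hp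
  intro n
  induction n using Nat.strong_induction_on with
  | _ n ih =>
    intro hn
    rw [hq] at hn
    have hn1 : 1 ≤ n := by omega
    have hdvd : (p : ℤ) ∣ 2 * v n := by
      rw [hv n hn1]
      apply dvd_sub
      · apply dvd_mul_of_dvd_right
        apply dvd_trans _ (Finset.dvd_prod_of_mem _ (show k + 1 ∈ Finset.Icc 1 n by
          simp [Finset.mem_Icc]; omega))
        have : (4 * ((k + 1 : ℕ) : ℤ) - 3) = (p : ℤ) := by push_cast; omega
        rw [this]
        exact dvd_pow_self _ (by norm_num)
      · apply Finset.dvd_sum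
        intro m hm
        rw [Finset.mem_Icc] at hm
        obtain ⟨hm1, hm2⟩ := hm
        rcases Nat.lt_or_ge m (2 * k + 1) with hmlt | hmge
        · rcases Nat.lt_or_ge (n - m) (2 * k + 1) with hnmlt | hnmge
          · -- p divides the binomial coefficient
            apply dvd_mul_of_dvd_left
            apply dvd_mul_of_dvd_left
            rw [Int.natCast_dvd_natCast]
            have h2n : 2 * n = 2 * m + 2 * (n - m) := by omega
            rw [h2n]
            exact hp.dvd_choose_add (by omega) (by omega) (by omega)
          · apply dvd_mul_of_dvd_right
            have := ih (n - m) (by omega) (by omega)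
            exact Int.modEq_zero_iff_dvd.mp this
        · apply dvd_mul_of_dvd_left
          apply dvd_mul_of_dvd_right
          have := ih m (by omega) (by omega)
          exact Int.modEq_zero_iff_dvd.mp this
    have := hpint.dvd_mul.mp hdvd
    rcases this with h2 | hv'
    · exfalso
      have hd : (p : ℕ) ∣ 2 := by exact_mod_cast h2
      have := Nat.le_of_dvd (by norm_num) hd
      omega
    · exact Int.modEq_zero_iff_dvd.mpr hv'
end

section
/- Let p be a prime with p ≤ 2n − γ, and suppose either γ = δ = 0, or 0 < γ < p and 0 ≤ δ ≤ ⌊(γ-1)/2⌋. Then Σ over k from ⌈n/p⌉ to n with n − k ≡ δ (mod (p−1)/2) of (2n−γ)! / ( ((2(n−k−δ)/(p−1))! · (2n − γ − p·2(n−k−δ)/(p−1))! · p^{2(n−k−δ)/(p−1)} ) is congruent to 0 modulo p. -/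
open Finset

/-- Number of permutations of `S_n` with exactly `j` `p`-cycles (and order dividing `p`). -/
def Chat (p n j : ℕ) : ℕ :=
  if p * j ≤ n then n.factorial / (j.factorial * (n - p * j).factorial * p ^ j) else 0

/-- Total number of elements `x` with `x^p = 1` in `S_n`. -/
def Ssum (p n : ℕ) : ℕ := ∑ j ∈ Finset.range (n + 1), Chat p n j

lemma fact_pow_dvd (p : ℕ) (hp : 0 < p) : ∀ j : ℕ, j.factorial * p ^ j ∣ (p * j).factorial := by
  intro j
  induction j with
  | zero => simp
  | succ j ih =>
    have h0 : 0 < p * (j + 1) := by positivity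
    have h1 : (p * (j + 1)).factorial = (p * (j + 1)) * (p * (j + 1) - 1).factorial :=
      (Nat.mul_factorial_pred h0.ne').symm
    have hee : p * (j + 1) = p * j + p := by ring
    have h2 : (p * j).factorial ∣ (p * (j + 1) - 1).factorial :=
      Nat.factorial_dvd_factorial (by omega)
    have h3 : (j + 1).factorial * p ^ (j + 1) = (p * (j + 1)) * (j.factorial * p ^ j) := by
      rw [Nat.factorial_succ]; ring
    rw [h1, h3]
    exact mul_dvd_mul_left _ (dvd_trans ih h2)

lemma denom_dvd {p n j : ℕ} (hp : 0 < p) (h : p * j ≤ n) :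
    j.factorial * (n - p * j).factorial * p ^ j ∣ n.factorial := by
  have h1 : j.factorial * (n - p * j).factorial * p ^ j
      = (j.factorial * p ^ j) * (n - p * j).factorial := by ring
  rw [h1]
  exact dvd_trans (mul_dvd_mul_right (fact_pow_dvd p hp j) _)
    (Nat.factorial_mul_factorial_dvd_factorial h)

lemma chat_mul {p n j : ℕ} (hp : 0 < p) (h : p * j ≤ n) :
    Chat p n j * (j.factorial * (n - p * j).factorial * p ^ j) = n.factorial := by
  rw [Chat, if_pos h]
  exact Nat.div_mul_cancel (denom_dvd hp h)

lemma chat_zero (p n : ℕ) : Chat p n 0 = 1 := by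
  rw [Chat, if_pos (by omega)]
  simp [Nat.div_self (Nat.factorial_pos n)]

lemma ssum_lt {p n : ℕ} (h : n < p) : Ssum p n = 1 := by
  rw [Ssum, Finset.sum_eq_single_of_mem 0 (Finset.mem_range.mpr (by omega))]
  · exact chat_zero p n
  · intro j _ hj
    have h1 : p * 1 ≤ p * j := Nat.mul_le_mul_left p (Nat.one_le_iff_ne_zero.mpr hj)
    rw [Chat, if_neg (by omega)]

lemma chat_rec {p n : ℕ} (hp : 0 < p) (hpn : p ≤ n) (j : ℕ) :
    Chat p n (j + 1) = Chat p (n - 1) (j + 1)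
      + (n - 1).descFactorial (p - 1) * Chat p (n - p) j := by
  have hee : p * (j + 1) = p * j + p := by ring
  by_cases h : p * (j + 1) ≤ n
  · -- main case
    have hpj : p * j ≤ n - p := by omega
    have hD : 0 < (j+1).factorial * (n - p * (j+1)).factorial * p ^ (j+1) := by positivity
    rw [Chat, if_pos h]
    apply Nat.div_eq_of_eq_mul_left hD
    -- show n! = RHS * D
    have key2 : (n - 1).descFactorial (p - 1) * (n - p).factorial = (n - 1).factorial := by
      have h5 := Nat.factorial_mul_descFactorial (n := n - 1) (k := p - 1) (by omega)
      have e : n - 1 - (p - 1) = n - p := by omega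
      rw [e] at h5
      linarith [h5]
    have term2 : (n - 1).descFactorial (p - 1) * Chat p (n - p) j
        * ((j+1).factorial * (n - p * (j+1)).factorial * p ^ (j+1))
        = (j + 1) * p * (n-1).factorial := by
      have e : (j+1).factorial * (n - p * (j+1)).factorial * p ^ (j+1)
          = ((j + 1) * p) * (j.factorial * ((n - p) - p * j).factorial * p ^ j) := by
        have e2 : n - p * (j+1) = (n - p) - p * j := by omega
        rw [e2, Nat.factorial_succ]; ring
      rw [e, show (n - 1).descFactorial (p - 1) * Chat p (n - p) j *
            ((j + 1) * p * (j.factorial * ((n - p) - p * j).factorial * p ^ j))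
          = (j + 1) * p * ((n - 1).descFactorial (p - 1) *
            (Chat p (n - p) j * (j.factorial * ((n - p) - p * j).factorial * p ^ j))) by ring,
        chat_mul hp hpj, key2]
    have term1 : Chat p (n-1) (j+1) * ((j+1).factorial * (n - p * (j+1)).factorial * p ^ (j+1))
        = (n - p * (j + 1)) * (n - 1).factorial := by
      by_cases h2 : p * (j + 1) ≤ n - 1
      · have e : (n - p * (j+1)).factorial = (n - p * (j+1)) * ((n-1) - p * (j+1)).factorial := by
          have e1 : 0 < n - p * (j + 1) := by omega
          have e3 : n - p * (j + 1) - 1 = (n - 1) - p * (j + 1) := by omega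
          rw [← Nat.mul_factorial_pred e1.ne', e3]
        rw [e, show Chat p (n-1) (j+1) * ((j+1).factorial *
              ((n - p * (j+1)) * ((n-1) - p * (j+1)).factorial) * p ^ (j+1))
            = (n - p * (j+1)) * (Chat p (n-1) (j+1) *
              ((j+1).factorial * ((n-1) - p * (j+1)).factorial * p ^ (j+1))) by ring,
          chat_mul hp h2]
      · have e0 : n - p * (j + 1) = 0 := by omega
        rw [Chat, if_neg h2, e0]
        ring
    rw [add_mul, term1, term2]
    have hsum : n - p * (j + 1) + (j + 1) * p = n := by
      have : (j + 1) * p = p * (j + 1) := by ring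
      omega
    calc n.factorial = n * (n-1).factorial := (Nat.mul_factorial_pred (by omega)).symm
      _ = (n - p * (j + 1)) * (n - 1).factorial + (j + 1) * p * (n - 1).factorial := by
            rw [← add_mul, hsum]
  · -- all terms vanish
    have h1 : ¬ p * (j + 1) ≤ n - 1 := by omega
    have h2 : ¬ p * j ≤ n - p := by omega
    rw [Chat, if_neg h, Chat, if_neg h1, Chat, if_neg h2]
    simp

lemma ssum_rec {p n : ℕ} (hp : 1 < p) (hpn : p ≤ n) :
    Ssum p n = Ssum p (n - 1) + (n - 1).descFactorial (p - 1) * Ssum p (n - p) := by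
  obtain ⟨m, rfl⟩ : ∃ m, n = m + 1 := ⟨n - 1, by omega⟩
  rw [Nat.add_sub_cancel]
  rw [Ssum, Finset.sum_range_succ', chat_zero]
  have step : ∀ j ∈ Finset.range (m + 1), Chat p (m + 1) (j + 1)
      = Chat p m (j + 1) + m.descFactorial (p - 1) * Chat p (m + 1 - p) j := by
    intro j _
    have h := chat_rec (p := p) (n := m + 1) (by omega) hpn j
    rwa [Nat.add_sub_cancel] at h
  rw [Finset.sum_congr rfl step, Finset.sum_add_distrib, ← Finset.mul_sum]
  have e1 : 1 + ∑ j ∈ Finset.range (m + 1), Chat p m (j + 1) = Ssum p m := by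
    have hz : Chat p m (m + 1) = 0 := by
      rw [Chat, if_neg]
      have : m + 1 ≤ p * (m + 1) := Nat.le_mul_of_pos_left _ (by omega)
      omega
    rw [Finset.sum_range_succ, hz, add_zero, Ssum, Finset.sum_range_succ', chat_zero]
    ring
  have e2 : ∑ j ∈ Finset.range (m + 1), Chat p (m + 1 - p) j = Ssum p (m + 1 - p) := by
    rw [Ssum]
    symm
    apply Finset.sum_subset
    · exact Finset.range_subset_range.mpr (by omega)
    · intro x _ hx
      rw [Finset.mem_range, not_lt] at hx
      rw [Chat, if_neg]
      have : x ≤ p * x := Nat.le_mul_of_pos_left x (by omega)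
      omega
  rw [e2, ← e1]
  ring

lemma ssum_dvd {p : ℕ} (hp : p.Prime) (hodd : Odd p) :
    ∀ n, p ≤ n → p ∣ Ssum p n := by
  intro n
  induction n using Nat.strong_induction_on with
  | _ n ih =>
    intro hpn
    haveI : Fact p.Prime := ⟨hp⟩
    have hp1 : 1 < p := hp.one_lt
    rw [ssum_rec hp1 hpn]
    rcases eq_or_lt_of_le hpn with he | hlt
    · -- n = p : Wilson
      subst he
      rw [ssum_lt (by omega : p - 1 < p), ssum_lt (by omega : p - p < p),
        mul_one, Nat.descFactorial_self]
      rw [← ZMod.natCast_eq_zero_iff]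
      push_cast
      rw [ZMod.wilsons_lemma]
      ring
    · apply dvd_add
      · exact ih (n - 1) (by omega) (by omega)
      · rcases lt_or_ge n (2 * p) with h2 | h2
        · -- p < n < 2p : p divides the descending factorial
          apply Dvd.dvd.mul_right
          rw [Nat.descFactorial_eq_prod_range]
          have hmem : (n - 1 - p) ∈ Finset.range (p - 1) := Finset.mem_range.mpr (by omega)
          have hd : n - 1 - (n - 1 - p) ∣ ∏ i ∈ Finset.range (p - 1), (n - 1 - i) :=
            Finset.dvd_prod_of_mem _ hmem
          have e : n - 1 - (n - 1 - p) = p := by omega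
          rwa [e] at hd
        · apply Dvd.dvd.mul_left
          exact ih (n - p) (by omega) (by omega)

/-- The re-indexed Frobenius sum vanishes mod `p`: for an odd prime `p ≤ 2n − γ`, with
either `γ = δ = 0` or `0 < γ < p` and `δ ≤ ⌊(γ-1)/2⌋`, the sum over `k` from `⌈n/p⌉` to `n`
with `n − k ≡ δ (mod (p−1)/2)` of `(2n−γ)!/(j!·(2n−γ−pj)!·p^j)` with
`j = 2(n−k−δ)/(p−1)` (terms with `pj > 2n−γ` being `0`) is divisible by `p`. -/
theorem reindexed_frobenius_sum (p n γ δ : ℕ) (hp : p.Prime) (hodd : Odd p)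
    (hpn : p ≤ 2 * n - γ) (hγn : γ ≤ 2 * n)
    (hγδ : (γ = 0 ∧ δ = 0) ∨ (0 < γ ∧ γ < p ∧ δ ≤ (γ - 1) / 2)) :
    p ∣ ∑ k ∈ (Finset.Icc ((n + p - 1) / p) n).filter
          (fun k => (n - k) % ((p - 1) / 2) = δ),
        (fun j => if p * j ≤ 2 * n - γ then
            (2 * n - γ).factorial / (j.factorial * (2 * n - γ - p * j).factorial * p ^ j)
          else 0) ((n - k - δ) / ((p - 1) / 2)) := by
  show p ∣ ∑ k ∈ (Finset.Icc ((n + p - 1) / p) n).filter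
      (fun k => (n - k) % ((p - 1) / 2) = δ), Chat p (2 * n - γ) ((n - k - δ) / ((p - 1) / 2))
  have hodd' := hodd
  have hp2 : 2 ≤ p := hp.two_le
  have hpne2 : p ≠ 2 := by rintro rfl; exact (Nat.not_odd_iff_even.mpr even_two) hodd
  have hp3 : 3 ≤ p := by omega
  obtain ⟨t, ht⟩ := hodd
  set m := (p - 1) / 2 with hm_def
  clear_value m
  have hpm : p = 2 * m + 1 := by omega
  have hm : 0 < m := by omega
  by_cases hδm : m ≤ δ
  · rw [Finset.filter_false_of_mem, Finset.sum_empty]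
    · exact dvd_zero p
    · intro k _
      have := Nat.mod_lt (n - k) hm
      omega
  push_neg at hδm
  set N := 2 * n - γ with hN
  clear_value N
  set q := (n + p - 1) / p with hq_def
  clear_value q
  have hq1 : p * q ≤ n + p - 1 := by
    rw [mul_comm, hq_def]
    exact Nat.div_mul_le_self _ _
  have hδγ : p * δ ≤ m * γ := by
    rcases hγδ with ⟨h1, h2⟩ | ⟨h1, h2, h3⟩
    · simp [h1, h2]
    · have h4 : 2 * δ + 1 ≤ γ := by omega
      have e1 : p * (2 * δ + 1) ≤ p * γ := Nat.mul_le_mul_left p h4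
      have e2 : p * (2 * δ + 1) = 2 * (p * δ) + p := by ring
      have e3 : p * γ = 2 * (m * γ) + γ := by rw [hpm]; ring
      omega
  have key : ∀ j, p * j ≤ N → δ + j * m + q ≤ n := by
    intro j hj
    have h1 : m * (p * j) ≤ m * N := Nat.mul_le_mul_left m hj
    have e1 : m * (p * j) = p * (j * m) := by ring
    rw [e1] at h1
    have e2 : m * N + m * γ = 2 * (m * n) := by
      rw [hN, ← Nat.mul_add, show 2 * n - γ + γ = 2 * n by omega]
      ring
    have e3 : p * (δ + j * m + q) = p * δ + p * (j * m) + p * q := by ring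
    have e4 : p * (n + 1) = 2 * (m * n) + n + p := by rw [hpm]; ring
    have h5 : p * (δ + j * m + q) < p * (n + 1) := by omega
    have h6 := Nat.lt_of_mul_lt_mul_left h5
    omega
  have hbase : δ + q ≤ n := by
    have := key 0 (by omega)
    omega
  set J := (n - q - δ) / m with hJ_def
  clear_value J
  have hγlen : γ ≤ n := by
    rcases hγδ with ⟨h1, _⟩ | ⟨_, h2, _⟩ <;> omega
  have hJN : J ≤ N := by
    have h1 : J ≤ n - q - δ := by rw [hJ_def]; exact Nat.div_le_self _ _
    omega
  have hsumEq : ∑ k ∈ (Finset.Icc q n).filter (fun k => (n - k) % m = δ),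
      Chat p N ((n - k - δ) / m) = ∑ j ∈ Finset.range (J + 1), Chat p N j := by
    refine Finset.sum_nbij' (fun k => (n - k - δ) / m) (fun j => n - δ - j * m)
      ?_ ?_ ?_ ?_ ?_
    · -- forward membership
      intro k hk
      simp only [Finset.mem_filter, Finset.mem_Icc, Finset.mem_range] at hk ⊢
      obtain ⟨⟨hk1, hk2⟩, hk3⟩ := hk
      have hmod := Nat.div_add_mod (n - k) m
      have he1 : m * ((n - k) / m) = n - k - δ := by omega
      have he2 : (n - k - δ) / m = (n - k) / m := by
        rw [← he1, Nat.mul_div_cancel_left _ hm]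
      rw [he2]
      have h3 : (n - k) / m * m ≤ n - q - δ := by
        rw [mul_comm, he1]
        omega
      have h4 : (n - k) / m ≤ J := by
        rw [hJ_def]
        exact (Nat.le_div_iff_mul_le hm).mpr h3
      omega
    · -- backward membership
      intro j hj
      simp only [Finset.mem_range] at hj
      simp only [Finset.mem_filter, Finset.mem_Icc]
      have h1 : j * m ≤ n - q - δ := by
        calc j * m ≤ J * m := Nat.mul_le_mul_right m (by omega)
          _ ≤ n - q - δ := by rw [hJ_def]; exact Nat.div_mul_le_self _ _
      have h2 : δ + j * m + q ≤ n := by omega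
      refine ⟨⟨by omega, by omega⟩, ?_⟩
      have he : n - (n - δ - j * m) = δ + j * m := by omega
      rw [he, Nat.add_mul_mod_self_right, Nat.mod_eq_of_lt hδm]
    · -- left inverse
      intro k hk
      simp only [Finset.mem_filter, Finset.mem_Icc] at hk
      obtain ⟨⟨hk1, hk2⟩, hk3⟩ := hk
      show n - δ - (n - k - δ) / m * m = k
      have hmod := Nat.div_add_mod (n - k) m
      have he1 : m * ((n - k) / m) = n - k - δ := by omega
      have he2 : (n - k - δ) / m = (n - k) / m := by
        rw [← he1, Nat.mul_div_cancel_left _ hm]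
      rw [he2, mul_comm]
      omega
    · -- right inverse
      intro j hj
      simp only [Finset.mem_range] at hj
      have h1 : j * m ≤ n - q - δ := by
        calc j * m ≤ J * m := Nat.mul_le_mul_right m (by omega)
          _ ≤ n - q - δ := by rw [hJ_def]; exact Nat.div_mul_le_self _ _
      have h2 : δ + j * m + q ≤ n := by omega
      show (n - (n - δ - j * m) - δ) / m = j
      have he : n - (n - δ - j * m) - δ = j * m := by omega
      rw [he, Nat.mul_div_cancel _ hm]
    · intro k _
      rfl
  rw [hsumEq]
  have hfinal : ∑ j ∈ Finset.range (J + 1), Chat p N j = Ssum p N := by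
    rw [Ssum]
    apply Finset.sum_subset (Finset.range_subset_range.mpr (by omega))
    intro x _ hx
    rw [Finset.mem_range, not_lt] at hx
    rw [Chat, if_neg]
    intro hc
    have h1 := key x hc
    have hxJ : x ≤ J := by
      rw [hJ_def]
      exact (Nat.le_div_iff_mul_le hm).mpr (by omega)
    omega
  rw [hfinal]
  exact ssum_dvd hp hodd' N (by omega)
end
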